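/- Let n ≥ 1, let 0 ≤ ℓ ≤ n be an integer, let C ≥ 0, and let A, B ∈ ℂ^{n×n} with ‖A‖_F ≤ n, ‖B‖_F ≤ C·n, and rank(B) ≤ ℓ. Then |det(A + B)| ≤ (n^n / ((n−ℓ)^{(n−ℓ)/2} · ℓ^{ℓ/2})) · (1 + C)^ℓ, with the convention 0^0 = 1. -/

import Mathlib

open Matrix BigOperators

/-- The Frobenius norm of a complex matrix. -/
noncomputable def frobNorm {n : ℕ} (M : Matrix (Fin n) (Fin n) ℂ) : ℝ :=
  Real.sqrt (∑ i : Fin n, ∑ j : Fin n, ‖M i j‖ ^ 2)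

open Finset ComplexOrder in
private lemma amgm_finset' {ι : Type*} (s : Finset ι) (f : ι → ℝ) (hf : ∀ i ∈ s, 0 ≤ f i) :
    ∏ i ∈ s, f i ≤ ((∑ i ∈ s, f i) / s.card) ^ s.card := by
  rcases s.eq_empty_or_nonempty with rfl | hs
  · simp
  have hc : (0:ℝ) < s.card := by exact_mod_cast Finset.card_pos.mpr hs
  have hw : ∑ _i ∈ s, (s.card:ℝ)⁻¹ = 1 := by
    rw [Finset.sum_const, nsmul_eq_mul, mul_inv_cancel₀ hc.ne']
  have h := Real.geom_mean_le_arith_mean_weighted s (fun _ => (s.card:ℝ)⁻¹) f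
    (fun i _ => by positivity) hw hf
  rw [Real.finset_prod_rpow s f hf] at h
  have h2 : ((∏ i ∈ s, f i) ^ ((s.card:ℝ)⁻¹)) ^ (s.card:ℕ) ≤ (∑ i ∈ s, (s.card:ℝ)⁻¹ * f i) ^ (s.card:ℕ) := by
    apply pow_le_pow_left₀ (Real.rpow_nonneg (Finset.prod_nonneg hf) _) h
  have h3 : ((∏ i ∈ s, f i) ^ ((s.card:ℝ)⁻¹)) ^ (s.card:ℕ) = ∏ i ∈ s, f i := by
    rw [← Real.rpow_natCast (((∏ i ∈ s, f i) ^ ((s.card:ℝ)⁻¹))) s.card,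
      ← Real.rpow_mul (Finset.prod_nonneg hf), inv_mul_cancel₀ hc.ne', Real.rpow_one]
  rw [h3] at h2
  refine h2.trans (le_of_eq ?_)
  congr 1
  rw [← Finset.mul_sum, inv_mul_eq_div]

open Finset ComplexOrder in
private lemma trace_eq_sum_eig' {n : ℕ} {G : Matrix (Fin n) (Fin n) ℂ} (hG : G.IsHermitian) :
    G.trace = ∑ i, (hG.eigenvalues i : ℂ) := by
  exact hG.trace_eq_sum_eigenvalues

open Finset ComplexOrder in
private lemma hadamard_col' {n : ℕ} (N : Matrix (Fin n) (Fin n) ℂ) :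
    (‖N.det‖)^2 ≤ ∏ i, (∑ j, ‖N j i‖ ^ 2) := by
  set d : Fin n → ℝ := fun i => ∑ j, ‖N j i‖ ^ 2 with hd
  have hdnn : ∀ i, 0 ≤ d i := fun i => Finset.sum_nonneg fun j _ => by positivity
  set G := Nᴴ * N with hGdef
  have hG : G.PosSemidef := Matrix.posSemidef_conjTranspose_mul_self N
  have hGdiag : ∀ i, G i i = (d i : ℂ) := by
    intro i
    simp only [hGdef, Matrix.mul_apply, Matrix.conjTranspose_apply, hd]
    push_cast
    congr 1; ext j
    rw [← Complex.ofReal_pow, Complex.sq_norm, Complex.normSq_eq_conj_mul_self]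
    rfl
  have hdetG : G.det = ((‖N.det‖)^2 : ℝ) := by
    rw [hGdef, Matrix.det_mul, Matrix.det_conjTranspose]
    push_cast
    rw [← Complex.ofReal_pow, Complex.sq_norm, Complex.normSq_eq_conj_mul_self]
    rfl
  by_cases hpos : ∀ i, 0 < d i
  · set c : Fin n → ℝ := fun i => (Real.sqrt (d i))⁻¹ with hc
    have hcpos : ∀ i, 0 < c i := fun i => inv_pos.mpr (Real.sqrt_pos.mpr (hpos i))
    have hc2 : ∀ i, c i ^ 2 * d i = 1 := by
      intro i
      rw [hc]
      simp only []
      rw [← Real.sqrt_inv, Real.sq_sqrt (by positivity)]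
      rw [inv_mul_cancel₀ (hpos i).ne']
    set D := Matrix.diagonal (fun i => (c i : ℂ)) with hD
    have hDH : Dᴴ = D := by
      rw [hD, Matrix.diagonal_conjTranspose]
      have : (star fun i => ((c i : ℝ) : ℂ)) = fun i => ((c i : ℝ) : ℂ) :=
        funext fun i => Complex.conj_ofReal _
      rw [this]
    set K := Dᴴ * G * D with hK
    have hKpsd : K.PosSemidef := hG.conjTranspose_mul_mul_same D
    have hKdiag : ∀ i, K i i = 1 := by
      intro i
      rw [hK, hDH, hD, Matrix.mul_diagonal, Matrix.diagonal_mul, hGdiag]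
      rw [← Complex.ofReal_mul, ← Complex.ofReal_mul]
      norm_cast
      calc c i * d i * c i = c i ^2 * d i := by ring
      _ = 1 := hc2 i
    have htr : K.trace = (n : ℂ) := by
      rw [Matrix.trace]
      simp [Matrix.diag, hKdiag]
    have hsum : ∑ i, hKpsd.1.eigenvalues i = (n : ℝ) := by
      have := trace_eq_sum_eig' hKpsd.1
      rw [htr] at this
      exact_mod_cast this.symm
    have hprodle : ∏ i, hKpsd.1.eigenvalues i ≤ 1 := by
      have := amgm_finset' Finset.univ (fun i => hKpsd.1.eigenvalues i)
        (fun i _ => hKpsd.eigenvalues_nonneg i)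
      rcases Nat.eq_zero_or_pos n with h0 | h0
      · subst h0; simp
      · rw [hsum] at this
        simpa [Finset.card_univ, div_self (show (n:ℝ) ≠ 0 by positivity)] using this
    have hdetK : K.det = ((∏ i, hKpsd.1.eigenvalues i : ℝ) : ℂ) := by
      rw [hKpsd.1.det_eq_prod_eigenvalues]
      push_cast
      rfl
    have hdetD : D.det = ((∏ i, c i : ℝ) : ℂ) := by
      rw [hD, Matrix.det_diagonal]; push_cast; rfl
    have hdetKG : K.det = (((∏ i, c i)^2 : ℝ) : ℂ) * G.det := by
      rw [hK, Matrix.det_mul, Matrix.det_mul, hDH, hdetD]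
      push_cast
      ring
    have hcprod : (0:ℝ) < ∏ i, c i := Finset.prod_pos fun i _ => hcpos i
    have key : ((∏ i, c i)^2) * ((‖N.det‖)^2) ≤ 1 := by
      have h0 : ((((∏ i, c i)^2) * ((‖N.det‖)^2) : ℝ) : ℂ) = K.det := by
        rw [hdetKG, hdetG]; push_cast; ring
      rw [hdetK] at h0
      have h2 : (((∏ i, c i)^2) * ((‖N.det‖)^2) : ℝ) = ∏ i, hKpsd.1.eigenvalues i := by
        exact_mod_cast h0
      rw [h2]; exact hprodle
    have hprodd : ∏ i, d i = ((∏ i, c i)^2)⁻¹ := by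
      rw [← Finset.prod_pow, ← Finset.prod_inv_distrib]
      congr 1; funext i
      rw [hc]
      simp only []
      rw [← Real.sqrt_inv, Real.sq_sqrt (by positivity), inv_inv]
    rw [hprodd, inv_eq_one_div, le_div_iff₀ (by positivity)]
    nlinarith [key]
  · push_neg at hpos
    obtain ⟨i, hi⟩ := hpos
    have hdi : d i = 0 := le_antisymm hi (hdnn i)
    have hcol : ∀ j, N j i = 0 := by
      intro j
      have := (Finset.sum_eq_zero_iff_of_nonneg (fun j _ => by positivity)).mp hdi j (Finset.mem_univ j)
      simpa using this
    rw [Matrix.det_eq_zero_of_column_eq_zero i hcol]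
    simp only [norm_zero, ne_eq, OfNat.ofNat_ne_zero, not_false_eq_true, zero_pow]
    exact Finset.prod_nonneg fun i _ => hdnn i

open Finset in
private lemma exists_onb' {n ℓ : ℕ} (hℓ : ℓ ≤ n) (B : Matrix (Fin n) (Fin n) ℂ) (hrk : B.rank ≤ ℓ) :
    ∃ b : OrthonormalBasis (Fin n) ℂ (EuclideanSpace ℂ (Fin n)),
      ∀ i : Fin n, (i : ℕ) < n - ℓ → B.mulVec (WithLp.equiv 2 (Fin n → ℂ) (b i)) = 0 := by
  classical
  set f := Matrix.toEuclideanLin B with hf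
  have hdimE : Module.finrank ℂ (EuclideanSpace ℂ (Fin n)) = n := by
    simp [finrank_euclideanSpace]
  have hrank : B.rank = Module.finrank ℂ (LinearMap.range f) := by
    rw [Matrix.rank_eq_finrank_range_toLin B (PiLp.basisFun 2 ℂ (Fin n)) (PiLp.basisFun 2 ℂ (Fin n))]
    rfl
  have hdimK : n - ℓ ≤ Module.finrank ℂ (LinearMap.ker f) := by
    have h1 := LinearMap.finrank_range_add_finrank_ker f
    rw [hdimE, ← hrank] at h1
    omega
  set kb := stdOrthonormalBasis ℂ (LinearMap.ker f) with hkb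
  set v : Fin n → EuclideanSpace ℂ (Fin n) := fun i =>
    if h : (i : ℕ) < n - ℓ then (kb (Fin.castLE hdimK ⟨(i : ℕ), h⟩) : EuclideanSpace ℂ (Fin n)) else 0 with hv
  have hvmem : ∀ i : Fin n, (i : ℕ) < n - ℓ → v i ∈ LinearMap.ker f := by
    intro i h
    rw [hv]
    simp only [dif_pos h]
    exact (kb _).2
  have hvon : Orthonormal ℂ (Set.restrict {i : Fin n | (i : ℕ) < n - ℓ} v) := by
    rw [orthonormal_iff_ite]
    rintro ⟨i, hi⟩ ⟨j, hj⟩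
    have hi' : (i : ℕ) < n - ℓ := hi
    have hj' : (j : ℕ) < n - ℓ := hj
    simp only [Set.restrict_apply, hv, dif_pos hi', dif_pos hj']
    show inner ℂ (v i) (v j) = _
    simp only [hv, dif_pos hi', dif_pos hj']
    rw [← Submodule.coe_inner]
    rw [orthonormal_iff_ite.mp kb.orthonormal]
    congr 1
    simp only [eq_iff_iff]
    constructor
    · intro h
      have h2 : (i : ℕ) = (j : ℕ) := by
        have h3 := congrArg Fin.val h
        simpa using h3
      exact Subtype.ext (Fin.ext h2)
    · intro h
      have h2 : i = j := Subtype.mk_eq_mk.mp h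
      subst h2
      rfl
  obtain ⟨b, hb⟩ := hvon.exists_orthonormalBasis_extension_of_card_eq
    (by simp [hdimE])
  refine ⟨b, fun i hi => ?_⟩
  have hbi : b i = v i := hb i hi
  have hker : f (b i) = 0 := by
    rw [hbi]
    exact LinearMap.mem_ker.mp (hvmem i hi)
  have := congrArg (WithLp.equiv 2 (Fin n → ℂ)) hker
  change B *ᵥ (WithLp.equiv 2 (Fin n → ℂ)) (b i) = 0 at this
  simpa using this

open Finset in
private lemma trace_conjTranspose_mul_self' {n : ℕ} (X : Matrix (Fin n) (Fin n) ℂ) :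
    (Xᴴ * X).trace = ((∑ i, ∑ j, ‖X j i‖ ^ 2 : ℝ) : ℂ) := by
  rw [Matrix.trace]
  push_cast
  apply Finset.sum_congr rfl
  intro i _
  rw [Matrix.diag_apply, Matrix.mul_apply]
  apply Finset.sum_congr rfl
  intro j _
  rw [Matrix.conjTranspose_apply, ← Complex.ofReal_pow, Complex.sq_norm,
    Complex.normSq_eq_conj_mul_self]
  rfl

open Finset in
private lemma sq_frob_mul_unitary' {n : ℕ} (M U : Matrix (Fin n) (Fin n) ℂ) (hU : U * Uᴴ = 1) :
    ∑ i, ∑ j, ‖(M * U) j i‖ ^ 2 = ∑ i, ∑ j, ‖M j i‖ ^ 2 := by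
  have h1 := trace_conjTranspose_mul_self' (M * U)
  have h2 : ((M * U)ᴴ * (M * U)).trace = (Mᴴ * M).trace := by
    rw [Matrix.conjTranspose_mul, Matrix.mul_assoc]
    rw [Matrix.trace_mul_comm]
    rw [Matrix.mul_assoc, Matrix.mul_assoc]
    rw [hU, Matrix.mul_one]
  rw [h2, trace_conjTranspose_mul_self'] at h1
  exact_mod_cast h1.symm

section
attribute [local instance] Matrix.frobeniusSeminormedAddCommGroup

private lemma frobNorm_add_le' {n : ℕ} (M N : Matrix (Fin n) (Fin n) ℂ) :
    frobNorm (M + N) ≤ frobNorm M + frobNorm N := by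
  have heq : ∀ X : Matrix (Fin n) (Fin n) ℂ, frobNorm X = ‖X‖ := by
    intro X
    rw [Matrix.frobenius_norm_def, frobNorm, Real.sqrt_eq_rpow]
    norm_num
  simp only [heq]
  exact norm_add_le M N

end

private lemma sq_frobNorm' {n : ℕ} (M : Matrix (Fin n) (Fin n) ℂ) :
    (frobNorm M)^2 = ∑ i : Fin n, ∑ j : Fin n, ‖M i j‖ ^ 2 := by
  rw [frobNorm, Real.sq_sqrt]
  positivity

private lemma cast_pow_self_pos (k : ℕ) : (0:ℝ) < (k:ℝ)^k := by
  cases k with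
  | zero => simp
  | succ m => positivity

private lemma numeric_final (n ℓ : ℕ) (hn : 1 ≤ n) (hℓ : ℓ ≤ n) (C : ℝ) (hC : 0 ≤ C)
    (x : ℝ) (hx : 0 ≤ x)
    (hsq : x^2 ≤ ((n:ℝ)^2/((n - ℓ : ℕ):ℝ))^(n-ℓ) * ((((1+C)*n)^2)/(ℓ:ℝ))^ℓ) :
    x ≤ (n : ℝ) ^ (n : ℝ) /
          (((n : ℝ) - (ℓ : ℝ)) ^ (((n : ℝ) - (ℓ : ℝ)) / 2) * (ℓ : ℝ) ^ ((ℓ : ℝ) / 2)) *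
        (1 + C) ^ ℓ := by
  have hcast : (n:ℝ) - (ℓ:ℝ) = ((n - ℓ : ℕ):ℝ) := by
    rw [Nat.cast_sub hℓ]
  rw [hcast]
  set x1 : ℝ := ((n - ℓ : ℕ):ℝ) with hx1
  set x2 : ℝ := (ℓ:ℝ) with hx2
  have hx1nn : 0 ≤ x1 := Nat.cast_nonneg _
  have hx2nn : 0 ≤ x2 := Nat.cast_nonneg _
  set T : ℝ := (n : ℝ) ^ (n : ℝ) / (x1 ^ (x1 / 2) * x2 ^ (x2 / 2)) * (1 + C) ^ ℓ with hT
  have hTnn : 0 ≤ T := by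
    apply mul_nonneg
    · apply div_nonneg (Real.rpow_nonneg (Nat.cast_nonneg n) _)
      exact mul_nonneg (Real.rpow_nonneg hx1nn _) (Real.rpow_nonneg hx2nn _)
    · positivity
  have hsq1 : (x1 ^ (x1 / 2))^2 = x1 ^ (n - ℓ : ℕ) := by
    rw [← Real.rpow_natCast (x1 ^ (x1 / 2)) 2, ← Real.rpow_mul hx1nn]
    norm_num
    rw [hx1, Real.rpow_natCast]
  have hsq2 : (x2 ^ (x2 / 2))^2 = x2 ^ ℓ := by
    rw [← Real.rpow_natCast (x2 ^ (x2 / 2)) 2, ← Real.rpow_mul hx2nn]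
    norm_num
    rw [hx2, Real.rpow_natCast]
  have hsqn : ((n:ℝ) ^ (n:ℝ))^2 = (n:ℝ) ^ (2 * n) := by
    rw [← Real.rpow_natCast ((n:ℝ) ^ (n:ℝ)) 2, ← Real.rpow_mul (Nat.cast_nonneg n)]
    rw [show ((n:ℝ) * (2:ℕ)) = ((2 * n : ℕ) : ℝ) by push_cast; ring]
    rw [Real.rpow_natCast]
  have hx1pow : (0:ℝ) < x1 ^ (n - ℓ : ℕ) := cast_pow_self_pos (n - ℓ)
  have hx2pow : (0:ℝ) < x2 ^ ℓ := cast_pow_self_pos ℓ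
  have hT2 : T^2 = ((n:ℝ)^2/x1)^(n-ℓ) * ((((1+C)*n)^2)/x2)^ℓ := by
    rw [hT, mul_pow, div_pow, mul_pow, hsq1, hsq2, hsqn, div_pow, div_pow,
      ← pow_mul, ← pow_mul, ← pow_mul, mul_pow (1+C) (n:ℝ) (2*ℓ)]
    rw [show 2*n = 2*(n-ℓ) + 2*ℓ from by omega, pow_add]
    rw [show ℓ*2 = 2*ℓ from by omega]
    field_simp
  have hle : x^2 ≤ T^2 := by rw [hT2]; exact hsq
  calc x = Real.sqrt (x^2) := (Real.sqrt_sq hx).symm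
  _ ≤ Real.sqrt (T^2) := Real.sqrt_le_sqrt hle
  _ = T := Real.sqrt_sq hTnn

set_option maxHeartbeats 1000000 in
theorem abs_det_add_le_of_low_rank (n : ℕ) (hn : 1 ≤ n) (ℓ : ℕ) (hℓ : ℓ ≤ n)
    (C : ℝ) (hC : 0 ≤ C) (A B : Matrix (Fin n) (Fin n) ℂ)
    (hA : frobNorm A ≤ n) (hB : frobNorm B ≤ C * n) (hrk : B.rank ≤ ℓ) :
    ‖(A + B).det‖ ≤
      (n : ℝ) ^ (n : ℝ) /
          (((n : ℝ) - (ℓ : ℝ)) ^ (((n : ℝ) - (ℓ : ℝ)) / 2) * (ℓ : ℝ) ^ ((ℓ : ℝ) / 2)) *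
        (1 + C) ^ ℓ := by
  classical
  obtain ⟨b, hbker⟩ := exists_onb' hℓ B hrk
  set M := A + B with hM
  set u : Fin n → (Fin n → ℂ) := fun i => WithLp.equiv 2 (Fin n → ℂ) (b i) with hu
  set U : Matrix (Fin n) (Fin n) ℂ := Matrix.of (fun j i => u i j) with hU
  have hUU : Uᴴ * U = 1 := by
    ext i i'
    rw [Matrix.mul_apply, Matrix.one_apply]
    simp only [Matrix.conjTranspose_apply, hU, Matrix.of_apply]
    have h := orthonormal_iff_ite.mp b.orthonormal i i'
    simp only [PiLp.inner_apply, RCLike.inner_apply] at h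
    rw [← h]; apply Finset.sum_congr rfl; intro x _; rw [mul_comm]; rfl
  have hUUc : U * Uᴴ = 1 := mul_eq_one_comm.mp hUU
  set N := M * U with hN
  set d : Fin n → ℝ := fun i => ∑ j, ‖N j i‖ ^ 2 with hd
  have hdnn : ∀ i, 0 ≤ d i := fun i => Finset.sum_nonneg fun j _ => by positivity
  -- |det U| = 1 and Hadamard
  have hdetU : ‖U.det‖ = 1 := by
    have h1 : ((Complex.normSq U.det : ℝ) : ℂ) = 1 := by
      rw [Complex.normSq_eq_conj_mul_self]
      calc (starRingEnd ℂ) U.det * U.det = star U.det * U.det := rfl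
      _ = Uᴴ.det * U.det := by rw [Matrix.det_conjTranspose]
      _ = (Uᴴ * U).det := (Matrix.det_mul _ _).symm
      _ = 1 := by rw [hUU, Matrix.det_one]
    have h2 : (‖U.det‖)^2 = 1 := by
      rw [Complex.sq_norm]
      exact_mod_cast h1
    rw [← Real.sqrt_sq (norm_nonneg U.det), h2, Real.sqrt_one]
  have hHad : (‖M.det‖)^2 ≤ ∏ i, d i := by
    have h := hadamard_col' N
    have hdetN : ‖N.det‖ = ‖M.det‖ := by
      rw [hN, Matrix.det_mul, norm_mul, hdetU, mul_one]
    rwa [hdetN] at h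
  -- the index set T'
  set T' : Finset (Fin n) := Finset.univ.map (Fin.castLEEmb (Nat.sub_le n ℓ)) with hT'
  have hTmem : ∀ i : Fin n, i ∈ T' ↔ (i:ℕ) < n - ℓ := by
    intro i
    rw [hT']
    simp only [Finset.mem_map, Finset.mem_univ, true_and]
    constructor
    · rintro ⟨a, rfl⟩
      exact a.isLt
    · intro h
      exact ⟨⟨(i:ℕ), h⟩, Fin.ext rfl⟩
  have hTcard : T'.card = n - ℓ := by simp [hT']
  have hTccard : T'ᶜ.card = ℓ := by
    rw [Finset.card_compl, hTcard]
    simp only [Fintype.card_fin]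
    omega
  -- columns in T' come from A * U
  have hcolA : ∀ i ∈ T', d i = ∑ j, ‖(A * U) j i‖ ^ 2 := by
    intro i hi
    have hk := hbker i ((hTmem i).mp hi)
    rw [hd]
    apply Finset.sum_congr rfl
    intro j _
    have hNji : N j i = (A * U) j i := by
      rw [hN, hM, Matrix.add_mul]
      have hBU : (B * U) j i = 0 := by
        rw [Matrix.mul_apply]
        have := congrFun hk j
        rw [Matrix.mulVec, dotProduct] at this
        simp only [Pi.zero_apply] at this
        rw [← this]
        apply Finset.sum_congr rfl
        intro k _
        rw [hU, Matrix.of_apply]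
      rw [Matrix.add_apply, hBU, add_zero]
    rw [hNji]
  -- sum bounds
  have hsq_d_total : ∑ i, d i ≤ ((1 + C) * n)^2 := by
    have h1 : ∑ i, d i = ∑ i, ∑ j, ‖M j i‖ ^ 2 := by
      rw [hd]
      exact sq_frob_mul_unitary' M U hUUc
    have h2 : ∑ i, ∑ j, ‖M j i‖ ^ 2 = (frobNorm M)^2 := by
      rw [sq_frobNorm']
      exact Finset.sum_comm
    have h3 : frobNorm M ≤ (1 + C) * n := by
      calc frobNorm M ≤ frobNorm A + frobNorm B := frobNorm_add_le' A B
      _ ≤ n + C * n := add_le_add hA hB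
      _ = (1 + C) * n := by ring
    rw [h1, h2]
    have h0 : 0 ≤ frobNorm M := Real.sqrt_nonneg _
    nlinarith [h3]
  have hsumT : ∑ i ∈ T', d i ≤ (n:ℝ)^2 := by
    have h1 : ∑ i ∈ T', d i = ∑ i ∈ T', ∑ j, ‖(A * U) j i‖ ^ 2 :=
      Finset.sum_congr rfl hcolA
    have h2 : ∑ i ∈ T', (∑ j, ‖(A * U) j i‖ ^ 2) ≤
        ∑ i, ∑ j, ‖(A * U) j i‖ ^ 2 :=
      Finset.sum_le_sum_of_subset_of_nonneg (Finset.subset_univ T')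
        (fun i _ _ => Finset.sum_nonneg fun j _ => by positivity)
    have h3 : ∑ i, ∑ j, ‖(A * U) j i‖ ^ 2 = ∑ i, ∑ j, ‖A j i‖ ^ 2 :=
      sq_frob_mul_unitary' A U hUUc
    have h4 : ∑ i, ∑ j, ‖A j i‖ ^ 2 = (frobNorm A)^2 := by
      rw [sq_frobNorm']
      exact Finset.sum_comm
    have h0 : 0 ≤ frobNorm A := Real.sqrt_nonneg _
    rw [h1]
    refine h2.trans ?_
    rw [h3, h4]
    nlinarith [hA]
  have hsumTc : ∑ i ∈ T'ᶜ, d i ≤ ((1 + C) * n)^2 := by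
    refine le_trans ?_ hsq_d_total
    exact Finset.sum_le_sum_of_subset_of_nonneg (Finset.subset_univ T'ᶜ)
      (fun i _ _ => hdnn i)
  -- AM-GM on both parts
  have hamT : ∏ i ∈ T', d i ≤ ((n:ℝ)^2/((n - ℓ : ℕ):ℝ))^(n-ℓ) := by
    have h := amgm_finset' T' d (fun i _ => hdnn i)
    rw [hTcard] at h
    refine h.trans ?_
    rcases Nat.eq_zero_or_pos (n - ℓ) with h0 | h0
    · rw [h0]; simp
    · apply pow_le_pow_left₀
      · apply div_nonneg (Finset.sum_nonneg fun i _ => hdnn i) (Nat.cast_nonneg _)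
      · exact (div_le_div_iff_of_pos_right (by exact_mod_cast h0)).mpr hsumT
  have hamTc : ∏ i ∈ T'ᶜ, d i ≤ ((((1+C)*n)^2)/(ℓ:ℝ))^ℓ := by
    have h := amgm_finset' T'ᶜ d (fun i _ => hdnn i)
    rw [hTccard] at h
    refine h.trans ?_
    rcases Nat.eq_zero_or_pos ℓ with h0 | h0
    · rw [h0]; simp
    · apply pow_le_pow_left₀
      · apply div_nonneg (Finset.sum_nonneg fun i _ => hdnn i) (Nat.cast_nonneg _)
      · exact (div_le_div_iff_of_pos_right (by exact_mod_cast h0)).mpr hsumTc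
  -- combine
  have hsplit : ∏ i, d i = (∏ i ∈ T', d i) * (∏ i ∈ T'ᶜ, d i) :=
    (Finset.prod_mul_prod_compl T' d).symm
  have hfinal : (‖M.det‖)^2 ≤
      ((n:ℝ)^2/((n - ℓ : ℕ):ℝ))^(n-ℓ) * ((((1+C)*n)^2)/(ℓ:ℝ))^ℓ := by
    refine hHad.trans ?_
    rw [hsplit]
    exact mul_le_mul hamT hamTc (Finset.prod_nonneg fun i _ => hdnn i)
      (by positivity)
  exact numeric_final n ℓ hn hℓ C hC (‖M.det‖) (norm_nonneg _) hfinal
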